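/- Under the MDP regularity assumptions and the nearest neighbor kernel assumptions, the joint Bellman–NN operator G has a unique fixed point q_h* : {1,…,n}×A → ℝ (i.e., Gq_h* = q_h*), and this fixed point satisfies max_{i,a} |q_h*(i,a)| ≤ V_max. -/
import Mathlib


open MeasureTheory

/-- The joint Bellman–nearest-neighbor operator `G` has a unique fixed point
`q_h*`, and this fixed point is bounded by `V_max`. -/
theorem joint_bellman_nn_operator_fixed_point
    (d : ℕ) (X : Set (EuclideanSpace ℝ (Fin d)))
    (hXne : X.Nonempty) (hXcomp : IsCompact X)
    (A : Type*) [Fintype A] [Nonempty A]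
    (γ β Rmax Vmax : ℝ)
    (hγ : γ ∈ Set.Ioo (0:ℝ) 1) (hβ : β = 1 / (1 - γ)) (hVmax : Vmax = β * Rmax)
    (r : EuclideanSpace ℝ (Fin d) → A → ℝ)
    (hr_meas : ∀ a, Measurable fun x => r x a)
    (hr_nonneg : ∀ x ∈ X, ∀ a : A, 0 ≤ r x a)
    (hr_bdd : ∀ x ∈ X, ∀ a : A, r x a ≤ Rmax)
    (p : EuclideanSpace ℝ (Fin d) → EuclideanSpace ℝ (Fin d) → A → ℝ)
    (hp_meas : ∀ x ∈ X, ∀ a : A, Measurable fun y => p y x a)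
    (hp_nonneg : ∀ y ∈ X, ∀ x ∈ X, ∀ a : A, 0 ≤ p y x a)
    (hp_int : ∀ x ∈ X, ∀ a : A, ∫ y in X, p y x a = 1)
    (n : ℕ) (hn : 0 < n)
    (c : Fin n → EuclideanSpace ℝ (Fin d)) (hc : ∀ i, c i ∈ X)
    (K : EuclideanSpace ℝ (Fin d) → Fin n → ℝ)
    (hK_meas : ∀ i, Measurable fun x => K x i)
    (hK_nonneg : ∀ x i, 0 ≤ K x i)
    (hK_sum : ∀ x, ∑ i, K x i = 1) :
    ∃ qstar : Fin n → A → ℝ,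
      (∀ (i : Fin n) (a : A),
        qstar i a =
          r (c i) a + γ * ∫ y in X, p y (c i) a * ⨆ b : A, ∑ j, K y j * qstar j b) ∧
      (∀ (i : Fin n) (a : A), |qstar i a| ≤ Vmax) ∧
      (∀ q' : Fin n → A → ℝ,
        (∀ (i : Fin n) (a : A),
          q' i a =
            r (c i) a + γ * ∫ y in X, p y (c i) a * ⨆ b : A, ∑ j, K y j * q' j b) →
        q' = qstar) := by
  classical
  obtain ⟨hγ0, hγ1⟩ := hγ
  have h1γ : (0:ℝ) < 1 - γ := by linarith
  have hXm : MeasurableSet X := hXcomp.isClosed.measurableSet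
  -- the "NN value function" of a q-function
  set F : (Fin n → A → ℝ) → EuclideanSpace ℝ (Fin d) → ℝ :=
    fun q y => ⨆ b : A, ∑ j, K y j * q j b with hFdef
  have hFeq : ∀ (q : Fin n → A → ℝ) (y : EuclideanSpace ℝ (Fin d)),
      F q y = Finset.univ.sup' Finset.univ_nonempty (fun b : A => ∑ j, K y j * q j b) :=
    fun q y => (Finset.sup'_univ_eq_ciSup _).symm
  have hFmeas : ∀ q : Fin n → A → ℝ, Measurable (F q) := by
    intro q
    have : F q = fun y =>
        Finset.univ.sup' Finset.univ_nonempty (fun b : A => ∑ j, K y j * q j b) :=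
      funext fun y => hFeq q y
    rw [this]
    have hm0 : Measurable (Finset.univ.sup' Finset.univ_nonempty
        (fun (b : A) (y : EuclideanSpace ℝ (Fin d)) => ∑ j, K y j * q j b)) :=
      Finset.measurable_sup' Finset.univ_nonempty
        (fun b _ => Finset.measurable_sum _ fun j _ => (hK_meas j).mul_const _)
    have heq : (fun y => Finset.univ.sup' Finset.univ_nonempty
          fun b : A => ∑ j, K y j * q j b)
        = Finset.univ.sup' Finset.univ_nonempty
          (fun (b : A) (y : EuclideanSpace ℝ (Fin d)) => ∑ j, K y j * q j b) :=
      funext fun y => (Finset.sup'_apply (C := fun _ : EuclideanSpace ℝ (Fin d) => ℝ)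
        Finset.univ_nonempty
        (fun (b : A) (y' : EuclideanSpace ℝ (Fin d)) => ∑ j, K y' j * q j b) y).symm
    rw [heq]
    exact hm0
  -- one-sided Lipschitz bound for F
  have hFkey : ∀ (q q' : Fin n → A → ℝ) (D : ℝ),
      (∀ j b, q j b - q' j b ≤ D) → ∀ y, F q y - F q' y ≤ D := by
    intro q q' D hD y
    rw [hFeq q y, hFeq q' y, sub_le_iff_le_add]
    apply Finset.sup'_le
    intro b _
    have h2 : ∑ j, K y j * (q j b - q' j b) ≤ ∑ j, K y j * D :=
      Finset.sum_le_sum fun j _ => mul_le_mul_of_nonneg_left (hD j b) (hK_nonneg y j)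
    have h3 : ∑ j, K y j * D = D := by rw [← Finset.sum_mul, hK_sum, one_mul]
    have h4 : ∑ j, K y j * (q j b - q' j b)
        = ∑ j, K y j * q j b - ∑ j, K y j * q' j b := by
      rw [← Finset.sum_sub_distrib]
      exact Finset.sum_congr rfl fun j _ => by ring
    have h5 : ∑ j, K y j * q' j b
        ≤ Finset.univ.sup' Finset.univ_nonempty (fun b : A => ∑ j, K y j * q' j b) :=
      Finset.le_sup' (fun b : A => ∑ j, K y j * q' j b) (Finset.mem_univ b)
    rw [h4, h3] at h2
    linarith
  have hFabs : ∀ (q q' : Fin n → A → ℝ) (D : ℝ),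
      (∀ j b, |q j b - q' j b| ≤ D) → ∀ y, |F q y - F q' y| ≤ D := by
    intro q q' D hD y
    rw [abs_sub_le_iff]
    constructor
    · exact hFkey q q' D (fun j b => (abs_le.1 (hD j b)).2) y
    · exact hFkey q' q D (fun j b => by
        have := (abs_le.1 (hD j b)).1; linarith) y
  have hF0 : ∀ y, F (0 : Fin n → A → ℝ) y = 0 := by
    intro y
    simp [hFdef]
  have hFbdd : ∀ (q : Fin n → A → ℝ) (y : EuclideanSpace ℝ (Fin d)), |F q y| ≤ ‖q‖ := by
    intro q y
    have := hFabs q 0 ‖q‖ (fun j b => by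
      have h1 : ‖q j b‖ ≤ ‖q j‖ := norm_le_pi_norm (q j) b
      have h2 : ‖q j‖ ≤ ‖q‖ := norm_le_pi_norm q j
      simpa [Real.norm_eq_abs] using h1.trans h2) y
    simpa [hF0 y] using this
  -- integrability of the kernel
  have hpInt : ∀ (i : Fin n) (a : A),
      Integrable (fun y => p y (c i) a) (volume.restrict X) := by
    intro i a
    by_contra h
    have h0 : ∫ y in X, p y (c i) a = 0 := integral_undef h
    rw [hp_int (c i) (hc i) a] at h0
    norm_num at h0
  -- main integral estimate
  have hInt : ∀ (i : Fin n) (a : A) (f : EuclideanSpace ℝ (Fin d) → ℝ), Measurable f →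
      ∀ M : ℝ, 0 ≤ M → (∀ y, |f y| ≤ M) →
      Integrable (fun y => p y (c i) a * f y) (volume.restrict X) ∧
      |∫ y in X, p y (c i) a * f y| ≤ M := by
    intro i a f hf M hM hfM
    have hpm := hp_meas (c i) (hc i) a
    have hpos : ∀ᵐ y ∂(volume.restrict X), 0 ≤ p y (c i) a :=
      (ae_restrict_iff' hXm).2 (ae_of_all _ fun y hy => hp_nonneg y hy (c i) (hc i) a)
    have hbd : ∀ᵐ y ∂(volume.restrict X),
        ‖p y (c i) a * f y‖ ≤ M * p y (c i) a := by
      filter_upwards [hpos] with y hy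
      rw [Real.norm_eq_abs, abs_mul, abs_of_nonneg hy]
      calc p y (c i) a * |f y| ≤ p y (c i) a * M :=
            mul_le_mul_of_nonneg_left (hfM y) hy
        _ = M * p y (c i) a := by ring
    have hint : Integrable (fun y => p y (c i) a * f y) (volume.restrict X) :=
      Integrable.mono' ((hpInt i a).const_mul M)
        ((hpm.mul hf).aestronglyMeasurable) hbd
    refine ⟨hint, ?_⟩
    calc |∫ y in X, p y (c i) a * f y| ≤ ∫ y in X, |p y (c i) a * f y| :=
          norm_integral_le_integral_norm (μ := volume.restrict X)
            (fun y => p y (c i) a * f y)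
      _ ≤ ∫ y in X, M * p y (c i) a := by
          refine integral_mono_ae hint.abs ((hpInt i a).const_mul M) ?_
          filter_upwards [hbd] with y hy
          exact hy
      _ = M * ∫ y in X, p y (c i) a := integral_const_mul _ _
      _ = M := by rw [hp_int (c i) (hc i) a, mul_one]
  -- the operator G
  set G : (Fin n → A → ℝ) → (Fin n → A → ℝ) :=
    fun q i a => r (c i) a + γ * ∫ y in X, p y (c i) a * F q y with hGdef
  -- G is a γ-contraction
  have hLip : ∀ q q' : Fin n → A → ℝ, dist (G q) (G q') ≤ γ * dist q q' := by
    intro q q'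
    have hD : (0:ℝ) ≤ dist q q' := dist_nonneg
    rw [dist_pi_le_iff (by positivity)]
    intro i
    rw [dist_pi_le_iff (by positivity)]
    intro a
    have hqb : ∀ j b, |q j b - q' j b| ≤ dist q q' := by
      intro j b
      calc |q j b - q' j b| = dist (q j b) (q' j b) := (Real.dist_eq _ _).symm
        _ ≤ dist (q j) (q' j) := dist_le_pi_dist (q j) (q' j) b
        _ ≤ dist q q' := dist_le_pi_dist q q' j
    have hI1 := hInt i a (F q) (hFmeas q) ‖q‖ (norm_nonneg q) (hFbdd q)
    have hI2 := hInt i a (F q') (hFmeas q') ‖q'‖ (norm_nonneg q') (hFbdd q')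
    have hsub : (∫ y in X, p y (c i) a * F q y) - ∫ y in X, p y (c i) a * F q' y
        = ∫ y in X, p y (c i) a * (F q y - F q' y) := by
      rw [← integral_sub hI1.1 hI2.1]
      exact integral_congr_ae (ae_of_all _ fun y => by ring)
    have hI3 := hInt i a (fun y => F q y - F q' y) ((hFmeas q).sub (hFmeas q'))
      (dist q q') hD (fun y => hFabs q q' _ hqb y)
    rw [Real.dist_eq]
    calc |G q i a - G q' i a|
        = γ * |(∫ y in X, p y (c i) a * F q y) - ∫ y in X, p y (c i) a * F q' y| := by
          rw [hGdef]
          simp only []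
          rw [show r (c i) a + γ * (∫ y in X, p y (c i) a * F q y)
              - (r (c i) a + γ * ∫ y in X, p y (c i) a * F q' y)
              = γ * ((∫ y in X, p y (c i) a * F q y)
                - ∫ y in X, p y (c i) a * F q' y) by ring]
          rw [abs_mul, abs_of_pos hγ0]
      _ ≤ γ * dist q q' := by
          rw [hsub]
          exact mul_le_mul_of_nonneg_left hI3.2 hγ0.le
  have hcontr : ContractingWith ⟨γ, hγ0.le⟩ G := by
    constructor
    · exact_mod_cast hγ1
    · exact LipschitzWith.of_dist_le_mul fun q q' => hLip q q'
  set qs : Fin n → A → ℝ := ContractingWith.fixedPoint G hcontr with hqs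
  have hfix : G qs = qs := hcontr.fixedPoint_isFixedPt
  have hfix' : ∀ (i : Fin n) (a : A),
      qs i a = r (c i) a + γ * ∫ y in X, p y (c i) a * F qs y := by
    intro i a
    conv_lhs => rw [← hfix]
  -- bound: Rmax ≥ 0
  obtain ⟨x0, hx0⟩ := hXne
  have hRmax : 0 ≤ Rmax :=
    (hr_nonneg x0 hx0 (Classical.arbitrary A)).trans (hr_bdd x0 hx0 (Classical.arbitrary A))
  have hNbound : ‖qs‖ ≤ Rmax + γ * ‖qs‖ := by
    have hpos : (0:ℝ) ≤ Rmax + γ * ‖qs‖ := by positivity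
    rw [pi_norm_le_iff_of_nonneg hpos]
    intro i
    rw [pi_norm_le_iff_of_nonneg hpos]
    intro a
    have hIq := hInt i a (F qs) (hFmeas qs) ‖qs‖ (norm_nonneg qs) (hFbdd qs)
    rw [Real.norm_eq_abs, hfix' i a]
    have habsr : |r (c i) a| ≤ Rmax := by
      rw [abs_of_nonneg (hr_nonneg (c i) (hc i) a)]
      exact hr_bdd (c i) (hc i) a
    calc |r (c i) a + γ * ∫ y in X, p y (c i) a * F qs y|
        ≤ |r (c i) a| + |γ * ∫ y in X, p y (c i) a * F qs y| := abs_add_le _ _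
      _ ≤ Rmax + γ * ‖qs‖ := by
          rw [abs_mul, abs_of_pos hγ0]
          exact add_le_add habsr (mul_le_mul_of_nonneg_left hIq.2 hγ0.le)
  have hNV : ‖qs‖ ≤ Vmax := by
    rw [hVmax, hβ]
    rw [div_mul_eq_mul_div, one_mul, le_div_iff₀ h1γ]
    nlinarith [hNbound]
  refine ⟨qs, ?_, ?_, ?_⟩
  · exact hfix'
  · intro i a
    have h1 : ‖qs i a‖ ≤ ‖qs i‖ := norm_le_pi_norm (qs i) a
    have h2 : ‖qs i‖ ≤ ‖qs‖ := norm_le_pi_norm qs i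
    calc |qs i a| = ‖qs i a‖ := (Real.norm_eq_abs _).symm
      _ ≤ ‖qs‖ := h1.trans h2
      _ ≤ Vmax := hNV
  · intro q' hq'
    exact hcontr.fixedPoint_unique (funext fun i => funext fun a => (hq' i a).symm)
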